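/- Define P₁ on the four atoms of the algebra generated by A, B by P₁(A∧B)=25/36, P₁(A∧¬B)=P₁(¬A∧B)=5/36, P₁(¬A∧¬B)=1/36, and P₂ by P₂(A∧B)=27/36, P₂(A∧¬B)=P₂(¬A∧B)=4/36, P₂(¬A∧¬B)=1/36. Then P₁(A∧B) = P₁(A)·P₁(B) (A and B are independent under P₁) while P₂(A∧B) ≠ P₂(A)·P₂(B), yet both measures induce the same weak order on all 16 Boolean combinations of A and B. -/
import Mathlib


/-- Atom weights of the first measure. -/
noncomputable def w₁ : Bool × Bool → ℝ := fun p =>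
  if p.1 then (if p.2 then 25/36 else 5/36) else (if p.2 then 5/36 else 1/36)

/-- Atom weights of the second measure. -/
noncomputable def w₂ : Bool × Bool → ℝ := fun p =>
  if p.1 then (if p.2 then 27/36 else 4/36) else (if p.2 then 4/36 else 1/36)

/-- The measure of an event (a set of atoms) given atom weights. -/
noncomputable def Pr (w : Bool × Bool → ℝ) (S : Finset (Bool × Bool)) : ℝ := ∑ x ∈ S, w x

/-- The event A. -/
def Aev : Finset (Bool × Bool) := Finset.univ.filter (fun p => p.1 = true)

/-- The event B. -/
def Bev : Finset (Bool × Bool) := Finset.univ.filter (fun p => p.2 = true)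


lemma Pr_eq (w : Bool × Bool → ℝ) (S : Finset (Bool × Bool)) :
    Pr w S = (if (true,true) ∈ S then w (true,true) else 0)
      + (if (true,false) ∈ S then w (true,false) else 0)
      + (if (false,true) ∈ S then w (false,true) else 0)
      + (if (false,false) ∈ S then w (false,false) else 0) := by
  have h : Pr w S = ∑ x ∈ Finset.univ, if x ∈ S then w x else 0 := by
    rw [Finset.sum_ite_mem, Finset.univ_inter]; rfl
  rw [h, Fintype.sum_prod_type]
  simp [Fintype.sum_bool]
  ring

set_option maxHeartbeats 2000000 in
theorem stmt_2 :
    Pr w₁ (Aev ∩ Bev) = Pr w₁ Aev * Pr w₁ Bev ∧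
    Pr w₂ (Aev ∩ Bev) ≠ Pr w₂ Aev * Pr w₂ Bev ∧
    ∀ S T : Finset (Bool × Bool), (Pr w₁ T ≤ Pr w₁ S ↔ Pr w₂ T ≤ Pr w₂ S) := by
  refine ⟨?_, ?_, ?_⟩
  · simp only [Pr_eq, w₁]; norm_num [Aev, Bev]
  · simp only [Pr_eq, w₂]; norm_num [Aev, Bev]
  · intro S T
    simp only [Pr_eq, w₁, w₂]
    norm_num only
    split_ifs <;> norm_num
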